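/- Let ψ, σ₀, α, β be positive constants and let S : ℝ → ℝ be differentiable and strictly positive on (0, ∞), satisfying Nutting's equation σ₀ = ψ^{-1} S(t)^β t^α for all t > 0. Then the instantaneous relaxation time t_r(t) := −S(t)/S'(t) is proportional to a power of the stress: t_r(t) = (β/α) · ψ^{1/α} σ₀^{1/α} · S(t)^{−β/α} for all t > 0. In other words, the Nutting treatment postulates a single relaxation time proportional to a power of the stress. -/
import Mathlib


open Real

/-- For a differentiable, strictly positive stress `S` on `(0,∞)` satisfying
Nutting's equation, the instantaneous relaxation time `t_r(t) = −S(t)/S'(t)` is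
proportional to a power of the stress:
`t_r(t) = (β/α) · ψ^(1/α) · σ₀^(1/α) · S(t)^(−β/α)`. -/
theorem nutting_relaxation_time_power_of_stress (ψ σ₀ α β : ℝ)
    (hψ : 0 < ψ) (hσ₀ : 0 < σ₀) (hα : 0 < α) (hβ : 0 < β) (S : ℝ → ℝ)
    (hSdiff : ∀ t : ℝ, 0 < t → DifferentiableAt ℝ S t)
    (hSpos : ∀ t : ℝ, 0 < t → 0 < S t)
    (hNutting : ∀ t : ℝ, 0 < t → σ₀ = ψ⁻¹ * (S t) ^ β * t ^ α) :
    ∀ t : ℝ, 0 < t →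
      -(S t / deriv S t) =
        (β / α) * ψ ^ (1 / α) * σ₀ ^ (1 / α) * (S t) ^ (-(β / α)) := by
  intro t ht
  have hψσ : 0 < ψ * σ₀ := mul_pos hψ hσ₀
  set c : ℝ := (ψ * σ₀) ^ (1 / β) with hc
  have hcpos : 0 < c := rpow_pos_of_pos hψσ _
  set p : ℝ := -(α / β) with hp
  have hpneg : p < 0 := by rw [hp]; exact neg_lt_zero.mpr (div_pos hα hβ)
  have hSeq : ∀ s : ℝ, 0 < s → S s = c * s ^ p := by
    intro s hs
    have h := hNutting s hs
    have hSb : (S s) ^ β = ψ * σ₀ * s ^ (-α) := by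
      rw [h, Real.rpow_neg hs.le]
      field_simp
    have h1 : ((S s) ^ β) ^ β⁻¹ = S s :=
      Real.rpow_rpow_inv (hSpos s hs).le hβ.ne'
    have h2 : (ψ * σ₀ * s ^ (-α)) ^ β⁻¹ = c * s ^ p := by
      rw [Real.mul_rpow hψσ.le (rpow_pos_of_pos hs _).le,
        ← Real.rpow_mul hs.le]
      congr 1
      · rw [hc, one_div]
      · rw [hp]; field_simp
    rw [← h1, hSb, h2]
  have hderiv : deriv S t = c * p * t ^ (p - 1) := by
    have hEv : S =ᶠ[nhds t] fun s => c * s ^ p := by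
      filter_upwards [IsOpen.mem_nhds isOpen_Ioi (Set.mem_Ioi.mpr ht)] with s hs
      exact hSeq s hs
    have hdf : HasDerivAt (fun s : ℝ => c * s ^ p) (c * (p * t ^ (p - 1))) t :=
      (Real.hasDerivAt_rpow_const (Or.inl ht.ne')).const_mul c
    rw [hEv.deriv_eq, hdf.deriv]; ring
  rw [hderiv, hSeq t ht]
  have htp : (0:ℝ) < t ^ p := rpow_pos_of_pos ht _
  have hcq : c ^ (-(β / α)) = (ψ * σ₀) ^ (-(1 / α)) := by
    rw [hc, ← Real.rpow_mul hψσ.le]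
    congr 1
    field_simp
  have htq : (t ^ p) ^ (-(β / α)) = t := by
    rw [← Real.rpow_mul ht.le, show p * -(β / α) = 1 by rw [hp]; field_simp,
      Real.rpow_one]
  have hmulq : (c * t ^ p) ^ (-(β / α)) = (ψ * σ₀) ^ (-(1 / α)) * t := by
    rw [Real.mul_rpow hcpos.le htp.le, hcq, htq]
  have hψσq : ψ ^ (1 / α) * σ₀ ^ (1 / α) = (ψ * σ₀) ^ (1 / α) :=
    (Real.mul_rpow hψ.le hσ₀.le).symm
  have hcancel : (ψ * σ₀) ^ (1 / α) * (ψ * σ₀) ^ (-(1 / α)) = 1 := by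
    rw [← Real.rpow_add hψσ, add_neg_cancel, Real.rpow_zero]
  have hcancel2 : ψ ^ (1 / α) * σ₀ ^ (1 / α) * (ψ * σ₀) ^ (-(1 / α)) = 1 := by
    rw [hψσq]; exact hcancel
  have hrhs : (β / α) * ψ ^ (1 / α) * σ₀ ^ (1 / α) * (c * t ^ p) ^ (-(β / α))
      = (β / α) * t := by
    rw [hmulq]
    linear_combination (β / α) * t * hcancel2
  rw [hrhs, Real.rpow_sub_one ht.ne']
  have hX : c * t ^ p ≠ 0 := (mul_pos hcpos htp).ne'
  have hβα : β / α = -(1 / p) := by rw [hp]; field_simp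
  rw [hβα]
  rw [show c * p * (t ^ p / t) = p * (c * t ^ p) / t by ring,
    div_div_eq_mul_div, mul_comm p (c * t ^ p),
    mul_div_mul_left t p hX]
  ring
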